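/- arXiv:2602.01487 — 7 statements merged into one kernel-verified Lean document; each statement's English description precedes it below -/
import Mathlib

section
/- For 0 < D < 1, g_u < 0 and g_v < 0, the expression k² = (g_v + g_u)/(1−D) ± ((1+D)/(1−D))·√(g_v g_u / D) factorises as k² = −[√D·√(−g_v) ± √(−g_u)]·[√(−g_v) ± √D·√(−g_u)] / ((1−D)√D), and the choice with sign − is positive if and only if D·g_u > g_v (Turing instability condition, given also g_v > g_u/D is violated appropriately); in particular one of the two values of k² is always negative. -/
open Real

set_option maxHeartbeats 1000000 in
/-- For 0 < D < 1, g_u < 0, g_v < 0, the critical wavenumbers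
k² = (g_v+g_u)/(1−D) ± ((1+D)/(1−D))√(g_v g_u/D) factorise as
k² = −[√D√(−g_v) ± √(−g_u)]·[√(−g_v) ± √D√(−g_u)]/((1−D)√D)
(the sign + in the original corresponds to the sign − in the factorisation);
the value with sign + is positive iff D g_u > g_v and D g_v > g_u (i.e. g_v > g_u/D),
and the value with sign − is always negative. -/
theorem critical_wavenumber_factorisation (D gu gv : ℝ)
    (hD0 : 0 < D) (hD1 : D < 1) (hgu : gu < 0) (hgv : gv < 0) :
    (∀ s : ℝ, s = 1 ∨ s = -1 →
      (gv + gu) / (1 - D) + s * ((1 + D) / (1 - D)) * Real.sqrt (gv * gu / D)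
        = -((Real.sqrt D * Real.sqrt (-gv) - s * Real.sqrt (-gu))
            * (Real.sqrt (-gv) - s * Real.sqrt D * Real.sqrt (-gu)))
          / ((1 - D) * Real.sqrt D))
    ∧ (gv + gu) / (1 - D) - ((1 + D) / (1 - D)) * Real.sqrt (gv * gu / D) < 0
    ∧ (0 < (gv + gu) / (1 - D) + ((1 + D) / (1 - D)) * Real.sqrt (gv * gu / D)
        ↔ D * gu > gv ∧ D * gv > gu) := by
  set a := Real.sqrt (-gu) with ha
  set b := Real.sqrt (-gv) with hb
  set d := Real.sqrt D with hd
  have ha2 : a ^ 2 = -gu := Real.sq_sqrt (by linarith)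
  have hb2 : b ^ 2 = -gv := Real.sq_sqrt (by linarith)
  have hd2 : d ^ 2 = D := Real.sq_sqrt hD0.le
  have hap : 0 < a := Real.sqrt_pos.2 (by linarith)
  have hbp : 0 < b := Real.sqrt_pos.2 (by linarith)
  have hdp : 0 < d := Real.sqrt_pos.2 hD0
  have hd1 : d < 1 := by nlinarith
  have hdne : d ≠ 0 := ne_of_gt hdp
  have h1D : (0:ℝ) < 1 - D := by linarith
  have h1Dne : (1:ℝ) - D ≠ 0 := ne_of_gt h1D
  have hgu' : gu = -a ^ 2 := by linarith
  have hgv' : gv = -b ^ 2 := by linarith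
  have hDeq : D = d ^ 2 := hd2.symm
  have hsqrt : Real.sqrt (gv * gu / D) = a * b / d := by
    have h : gv * gu / D = (-gv) * (-gu) / D := by ring
    rw [h, Real.sqrt_div (by nlinarith) D, Real.sqrt_mul (by linarith) (-gu), ← ha, ← hb, ← hd]
    ring
  have h1Dne' : (1:ℝ) - d ^ 2 ≠ 0 := by rw [← hDeq]; exact h1Dne
  have key : ∀ s : ℝ, s = 1 ∨ s = -1 →
      (gv + gu) / (1 - D) + s * ((1 + D) / (1 - D)) * Real.sqrt (gv * gu / D)
        = -((d * b - s * a) * (b - s * d * a)) / ((1 - D) * d) := by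
    intro s hs
    rcases hs with rfl | rfl <;>
      · rw [hsqrt, hgu', hgv', hDeq]
        field_simp
        ring
  refine ⟨key, ?_, ?_⟩
  · have h2 : (gv + gu) / (1 - D) - ((1 + D) / (1 - D)) * Real.sqrt (gv * gu / D)
        = -((d * b + a) * (b + d * a)) / ((1 - D) * d) := by
      have := key (-1) (Or.inr rfl)
      linarith [this, (by ring : -((d * b - (-1) * a) * (b - (-1) * d * a)) / ((1 - D) * d)
        = -((d * b + a) * (b + d * a)) / ((1 - D) * d))]
    rw [h2]
    apply div_neg_of_neg_of_pos
    · nlinarith [mul_pos (show (0:ℝ) < d * b + a by positivity)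
        (show (0:ℝ) < b + d * a by positivity)]
    · positivity
  · have h3 : (gv + gu) / (1 - D) + ((1 + D) / (1 - D)) * Real.sqrt (gv * gu / D)
        = -((d * b - a) * (b - d * a)) / ((1 - D) * d) := by
      have := key 1 (Or.inl rfl)
      linarith [this, (by ring : -((d * b - 1 * a) * (b - 1 * d * a)) / ((1 - D) * d)
        = -((d * b - a) * (b - d * a)) / ((1 - D) * d))]
    rw [h3]
    have hQ : 0 < (1 - D) * d := by positivity
    have e1 : d ^ 2 * a ^ 2 = D * (-gu) := by rw [hd2, ha2]
    have e2 : d ^ 2 * b ^ 2 = D * (-gv) := by rw [hd2, hb2]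
    constructor
    · intro hpos
      have hP : (d * b - a) * (b - d * a) < 0 := by
        by_contra hc
        push_neg at hc
        have : -((d * b - a) * (b - d * a)) / ((1 - D) * d) ≤ 0 :=
          div_nonpos_of_nonpos_of_nonneg (by linarith) hQ.le
        linarith
      have h4 : d * b - a < 0 := by
        rcases lt_or_ge (d * b - a) 0 with h | h
        · exact h
        · exfalso
          have h5 : b - d * a < 0 := by nlinarith
          nlinarith
      have h5 : 0 < b - d * a := by nlinarith
      constructor
      · nlinarith [mul_pos h5 (show (0:ℝ) < b + d * a by positivity), e1, hb2]
      · nlinarith [mul_pos (show (0:ℝ) < a - d * b by linarith)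
          (show (0:ℝ) < a + d * b by positivity), e2, ha2]
    · rintro ⟨hc1, hc2⟩
      have hba : d * a < b := lt_of_pow_lt_pow_left₀ 2 hbp.le (by nlinarith [e1, hb2, hc1])
      have hab : d * b < a := lt_of_pow_lt_pow_left₀ 2 hap.le (by nlinarith [e2, ha2, hc2])
      have hP : (d * b - a) * (b - d * a) < 0 :=
        mul_neg_of_neg_of_pos (by linarith) (by linarith)
      exact div_pos (by linarith) hQ
end

section
/- Suppose v : ℝ → ℝ is a C² solution of v'' + c v' − G(v) = 0 which, together with v', tends to 0 as z → ±∞, G is continuous with G(0)=0, and v, v' ∈ L². Then c · ∫ (v')² dz = 0; hence if v is not constant, c = 0. In particular, no nonstationary homoclinic (pulse) solutions exist. -/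
open MeasureTheory Filter

/-- For a C² homoclinic solution of v'' + c v' − G(v) = 0 decaying (with
its derivative) at ±∞, we have c·∫(v')² = 0; hence if v is not constant then c = 0. -/
theorem no_nonstationary_pulses_D_one (c : ℝ) (G : ℝ → ℝ) (v : ℝ → ℝ)
    (hG : Continuous G) (hG0 : G 0 = 0)
    (hv : ContDiff ℝ 2 v)
    (hODE : ∀ z : ℝ, deriv (deriv v) z + c * deriv v z - G (v z) = 0)
    (hvTop : Tendsto v atTop (nhds 0)) (hvBot : Tendsto v atBot (nhds 0))
    (hv'Top : Tendsto (deriv v) atTop (nhds 0))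
    (hv'Bot : Tendsto (deriv v) atBot (nhds 0))
    (hvL2 : Integrable (fun z => (v z) ^ 2))
    (hv'L2 : Integrable (fun z => (deriv v z) ^ 2)) :
    c * ∫ z : ℝ, (deriv v z) ^ 2 = 0
      ∧ ((¬ ∀ x y : ℝ, v x = v y) → c = 0) := by
  have hvdiff : Differentiable ℝ v := hv.differentiable (by norm_num)
  have hv'diff : Differentiable ℝ (deriv v) := by
    have := (contDiff_succ_iff_deriv (n := 1)).mp hv
    exact this.2.2.differentiable (by norm_num)
  have hv'cont : Continuous (deriv v) := hv'diff.continuous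
  set H : ℝ → ℝ := fun u => ∫ t in (0:ℝ)..u, G t with hH
  have hHderiv : ∀ u : ℝ, HasDerivAt H (G u) u := fun u =>
    intervalIntegral.integral_hasDerivAt_right (hG.intervalIntegrable _ _)
      (hG.stronglyMeasurableAtFilter _ _) hG.continuousAt
  have hHcont : Continuous H :=
    (Differentiable.continuous fun u => (hHderiv u).differentiableAt)
  have hH0 : H 0 = 0 := by simp [hH]
  set F : ℝ → ℝ := fun z => (deriv v z) ^ 2 / 2 - H (v z) with hF
  have hFderiv : ∀ z, HasDerivAt F (-c * (deriv v z) ^ 2) z := by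
    intro z
    have h1 : HasDerivAt (fun z => (deriv v z) ^ 2 / 2)
        (deriv (deriv v) z * deriv v z) z := by
      have := ((hv'diff z).hasDerivAt.pow 2)
      have h2 := this.div_const 2
      refine h2.congr_deriv ?_
      ring
    have h3 : HasDerivAt (fun z => H (v z)) (G (v z) * deriv v z) z :=
      (hHderiv (v z)).comp z (hvdiff z).hasDerivAt
    have := h1.sub h3
    refine this.congr_deriv ?_
    have hode : deriv (deriv v) z = G (v z) - c * deriv v z := by linarith [hODE z]
    rw [hode]; ring
  have hint : Integrable (fun z => -c * (deriv v z) ^ 2) := hv'L2.const_mul _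
  have hFtop : Tendsto F atTop (nhds 0) := by
    have h1 : Tendsto (fun z => (deriv v z) ^ 2 / 2) atTop (nhds 0) := by
      have := (hv'Top.pow 2).div_const 2
      simpa using this
    have h2 : Tendsto (fun z => H (v z)) atTop (nhds 0) := by
      have := (hHcont.tendsto 0).comp hvTop
      simpa [hH0, Function.comp_def] using this
    simpa using h1.sub h2
  have hFbot : Tendsto F atBot (nhds 0) := by
    have h1 : Tendsto (fun z => (deriv v z) ^ 2 / 2) atBot (nhds 0) := by
      have := (hv'Bot.pow 2).div_const 2
      simpa using this
    have h2 : Tendsto (fun z => H (v z)) atBot (nhds 0) := by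
      have := (hHcont.tendsto 0).comp hvBot
      simpa [hH0, Function.comp_def] using this
    simpa using h1.sub h2
  have key : ∫ z : ℝ, -c * (deriv v z) ^ 2 = 0 := by
    have := MeasureTheory.integral_of_hasDerivAt_of_tendsto hFderiv hint hFbot hFtop
    simpa using this
  have hmain : c * ∫ z : ℝ, (deriv v z) ^ 2 = 0 := by
    rw [integral_const_mul] at key
    linarith
  refine ⟨hmain, fun hnc => ?_⟩
  by_contra hc
  apply hnc
  have hI : ∫ z : ℝ, (deriv v z) ^ 2 = 0 := by
    rcases mul_eq_zero.mp hmain with h | h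
    · exact absurd h hc
    · exact h
  have hzero : ∀ z, deriv v z = 0 := by
    by_contra h
    push_neg at h
    obtain ⟨z0, hz0⟩ := h
    have hpos : 0 < ∫ z : ℝ, (deriv v z) ^ 2 := by
      rw [integral_pos_iff_support_of_nonneg (fun z => sq_nonneg _) hv'L2]
      have hopen : IsOpen (Function.support fun z => (deriv v z) ^ 2) := by
        have : Function.support (fun z => (deriv v z) ^ 2) =
            (fun z => (deriv v z) ^ 2) ⁻¹' {0}ᶜ := by
          ext x; simp [Function.mem_support]
        rw [this]
        exact ((hv'cont.pow 2).isOpen_preimage _ isOpen_compl_singleton)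
      have hne : (Function.support fun z => (deriv v z) ^ 2).Nonempty :=
        ⟨z0, by simp [Function.mem_support, pow_eq_zero_iff, hz0]⟩
      exact hopen.measure_pos volume hne
    linarith
  exact is_const_of_deriv_eq_zero hvdiff hzero
end

section
/- The function q(z) = sech³(z) satisfies q'' + 12 sech²(z) q − 4q = 5q; that is, λ = 5 is an eigenvalue of the Schrödinger-type operator q ↦ q'' + 12 sech²(z) q − 4q, with positive eigenfunction sech³. Hence the stationary pulse is spectrally unstable. -/
lemma coshpos (z : ℝ) : (0:ℝ) < Real.cosh z := Real.cosh_pos z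

lemma hq1 (z : ℝ) :
    HasDerivAt (fun z => (1 / Real.cosh z) ^ 3)
      (-3 * Real.sinh z / Real.cosh z ^ 4) z := by
  have h : HasDerivAt (fun z => (Real.cosh z ^ 3)⁻¹)
      (-(3 * Real.cosh z ^ 2 * Real.sinh z) / (Real.cosh z ^ 3) ^ 2) z := by
    have := ((Real.hasDerivAt_cosh z).fun_pow 3).fun_inv (by positivity)
    simpa using this
  have heq : (fun z => (1 / Real.cosh z) ^ 3) = fun z => (Real.cosh z ^ 3)⁻¹ := by
    funext x; rw [one_div, inv_pow]
  rw [heq]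
  convert h using 1
  have hc := (coshpos z).ne'
  field_simp

lemma hq2 (z : ℝ) :
    HasDerivAt (fun z => -3 * Real.sinh z / Real.cosh z ^ 4)
      ((-3 * Real.cosh z ^ 2 + 12 * Real.sinh z ^ 2) / Real.cosh z ^ 5) z := by
  have hnum : HasDerivAt (fun z => -3 * Real.sinh z) (-3 * Real.cosh z) z :=
    (Real.hasDerivAt_sinh z).const_mul (-3)
  have hden : HasDerivAt (fun z => Real.cosh z ^ 4)
      (4 * Real.cosh z ^ 3 * Real.sinh z) z := by
    simpa using (Real.hasDerivAt_cosh z).fun_pow 4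
  have h := hnum.fun_div hden (by positivity)
  refine h.congr_deriv ?_
  have hc := (coshpos z).ne'
  field_simp
  ring

/-- λ = 5 is an eigenvalue of q ↦ q'' + 12 sech² q − 4q with positive
eigenfunction sech³; hence the stationary pulse is spectrally unstable. -/
theorem unstable_eigenvalue_stationary_pulse :
    let q : ℝ → ℝ := fun z => (1 / Real.cosh z) ^ 3
    (∀ z : ℝ, deriv (deriv q) z + 12 * (1 / Real.cosh z) ^ 2 * q z - 4 * q z = 5 * q z)
      ∧ ∀ z : ℝ, 0 < q z := by
  intro q
  constructor
  · intro z
    have hd1 : deriv q = fun z => -3 * Real.sinh z / Real.cosh z ^ 4 := by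
      funext x; exact (hq1 x).deriv
    have hd2 : deriv (deriv q) z
        = (-3 * Real.cosh z ^ 2 + 12 * Real.sinh z ^ 2) / Real.cosh z ^ 5 := by
      rw [hd1]; exact (hq2 z).deriv
    rw [hd2]
    have hc := (coshpos z).ne'
    have hs : Real.sinh z ^ 2 = Real.cosh z ^ 2 - 1 := by
      have := Real.cosh_sq_sub_sinh_sq z; linarith
    simp only [q]
    rw [hs]
    field_simp
    ring
  · intro z
    have := coshpos z
    positivity
end

section
/- The function q(z) = sech²(z) satisfies q'' + 6 sech²(z) q − 4q = 0, and the operator q ↦ q'' + 6 sech²(z) q − 4q has no eigenvalue λ > 0 with eigenfunction in L²(ℝ); its point spectrum is {−3, 0} with eigenfunctions sech(z)tanh(z) and sech²(z) respectively. -/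
open MeasureTheory
open Real

lemma cosh_ne (z : ℝ) : Real.cosh z ≠ 0 := (Real.cosh_pos z).ne'

lemma sinh_sq' (z : ℝ) : Real.sinh z ^ 2 = Real.cosh z ^ 2 - 1 := by
  have := Real.cosh_sq_sub_sinh_sq z; linarith

noncomputable def SFu (q q' : ℝ → ℝ) (z : ℝ) : ℝ :=
  q' z / Real.cosh z ^ 2 + 2 * q z * Real.sinh z / Real.cosh z ^ 3

noncomputable def SFr (q : ℝ → ℝ) (z : ℝ) : ℝ := q z * Real.cosh z ^ 2

lemma SFr_apply (q : ℝ → ℝ) (z : ℝ) : SFr q z = q z * Real.cosh z ^ 2 := rfl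

lemma hasDerivAt_SFr (q q' : ℝ → ℝ) (z : ℝ) (hq : HasDerivAt q (q' z) z) :
    HasDerivAt (SFr q) (SFu q q' z * Real.cosh z ^ 4) z := by
  have h := hq.mul ((Real.hasDerivAt_cosh z).pow 2)
  unfold SFr SFu
  refine (h.congr_deriv ?_).congr_deriv rfl; symm; simp only [Pi.pow_apply, Pi.sub_apply, Pi.mul_apply, Pi.div_apply]
  push_cast
  field_simp

lemma hasDerivAt_SFu (lam : ℝ) (q q' : ℝ → ℝ) (z : ℝ)
    (hq : HasDerivAt q (q' z) z)
    (hq' : HasDerivAt q' (lam * q z + 4 * q z - 6 * q z / Real.cosh z ^ 2) z) :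
    HasDerivAt (SFu q q') (lam * q z / Real.cosh z ^ 2) z := by
  have h1 := hq'.div ((Real.hasDerivAt_cosh z).pow 2) (pow_ne_zero 2 (cosh_ne z))
  have h2 := (((hq.const_mul (2:ℝ)).mul (Real.hasDerivAt_sinh z)).div
      ((Real.hasDerivAt_cosh z).pow 3) (pow_ne_zero 3 (cosh_ne z)))
  have h := h1.add h2
  unfold SFu
  refine (h.congr_deriv ?_).congr_deriv rfl; symm; simp only [Pi.pow_apply, Pi.sub_apply, Pi.mul_apply, Pi.div_apply]
  push_cast
  field_simp
  linear_combination (6 * q z) * sinh_sq' z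

set_option maxHeartbeats 1000000 in
lemma SFkey (lam : ℝ) (hlam : 0 < lam) (q q' : ℝ → ℝ)
    (hq : ∀ z, HasDerivAt q (q' z) z)
    (hq' : ∀ z, HasDerivAt q' (lam * q z + 4 * q z - 6 * q z / Real.cosh z ^ 2) z)
    (z₀ : ℝ) (h0 : 0 < q z₀) (hu0 : 0 ≤ SFu q q' z₀) :
    ¬ Integrable (fun z => q z ^ 2) := by
  intro hInt
  have hdu : ∀ z, HasDerivAt (SFu q q') (lam * q z / Real.cosh z ^ 2) z :=
    fun z => hasDerivAt_SFu lam q q' z (hq z) (hq' z)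
  have hdr : ∀ z, HasDerivAt (SFr q) (SFu q q' z * Real.cosh z ^ 4) z :=
    fun z => hasDerivAt_SFr q q' z (hq z)
  have hdiffq : Differentiable ℝ q := fun z => (hq z).differentiableAt
  have hcq : Continuous q := hdiffq.continuous
  have hdiffu : Differentiable ℝ (SFu q q') := fun z => (hdu z).differentiableAt
  have hcu : Continuous (SFu q q') := hdiffu.continuous
  have hdiffr : Differentiable ℝ (SFr q) := fun z => (hdr z).differentiableAt
  have hcr : Continuous (SFr q) := hdiffr.continuous
  have mono_u : ∀ s : Set ℝ, Convex ℝ s → (∀ x ∈ s, 0 ≤ q x) →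
      MonotoneOn (SFu q q') s := by
    intro s hs hpos
    refine monotoneOn_of_deriv_nonneg hs hcu.continuousOn
      (fun x _ => (hdu x).differentiableAt.differentiableWithinAt) ?_
    intro x hx
    rw [(hdu x).deriv]
    exact div_nonneg (mul_nonneg hlam.le (hpos x (interior_subset hx)))
      (pow_nonneg (Real.cosh_pos x).le 2)
  -- Step A : find a point where both q and u are strictly positive
  obtain ⟨z₂, hz₂0, hq2, hu2⟩ : ∃ z₂, z₀ ≤ z₂ ∧ 0 < q z₂ ∧ 0 < SFu q q' z₂ := by
    rcases hu0.lt_or_eq with h | h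
    · exact ⟨z₀, le_refl _, h0, h⟩
    · have hmem : q ⁻¹' (Set.Ioi 0) ∈ nhds z₀ :=
        hcq.continuousAt.preimage_mem_nhds (Ioi_mem_nhds h0)
      obtain ⟨ε, hε, hball⟩ := Metric.mem_nhds_iff.mp hmem
      have hqpos : ∀ x ∈ Set.Icc z₀ (z₀ + ε/2), 0 < q x := by
        intro x hx
        apply hball
        rw [Metric.mem_ball, Real.dist_eq, abs_sub_lt_iff]
        exact ⟨by linarith [hx.1, hx.2], by linarith [hx.1, hx.2]⟩
      have hmono : StrictMonoOn (SFu q q') (Set.Icc z₀ (z₀ + ε/2)) := by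
        refine strictMonoOn_of_deriv_pos (convex_Icc _ _) hcu.continuousOn ?_
        intro x hx
        rw [(hdu x).deriv]
        exact div_pos (mul_pos hlam (hqpos x (interior_subset hx)))
          (pow_pos (Real.cosh_pos x) 2)
      refine ⟨z₀ + ε/2, by linarith, hqpos _ ⟨by linarith, le_refl _⟩, ?_⟩
      have h2 := hmono (Set.left_mem_Icc.mpr (by linarith))
        (Set.right_mem_Icc.mpr (by linarith)) (by linarith)
      rw [← h] at h2
      exact h2
  have hr2pos : 0 < SFr q z₂ := by
    rw [SFr_apply]; exact mul_pos hq2 (pow_pos (Real.cosh_pos z₂) 2)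
  -- Step B : r is bounded below by r z₂ on [z₂, ∞)
  have hrge : ∀ z, z₂ ≤ z → SFr q z₂ ≤ SFr q z := by
    by_contra hcon
    push_neg at hcon
    obtain ⟨z₁, hz₁, hrlt⟩ := hcon
    set S : Set ℝ := {z | z ∈ Set.Icc z₂ z₁ ∧ SFr q z < SFr q z₂} with hS
    have hSne : S.Nonempty := ⟨z₁, ⟨hz₁, le_refl _⟩, hrlt⟩
    have hSbdd : BddBelow S := ⟨z₂, fun s hs => hs.1.1⟩
    set t := sInf S with ht
    have hz₂t : z₂ ≤ t := le_csInf hSne fun s hs => hs.1.1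
    have htz₁ : t ≤ z₁ := csInf_le hSbdd ⟨⟨hz₁, le_refl _⟩, hrlt⟩
    have hrt_le : SFr q t ≤ SFr q z₂ := by
      have hcl : closure S ⊆ {z | SFr q z ≤ SFr q z₂} :=
        closure_minimal (fun s hs => hs.2.le) (isClosed_le hcr continuous_const)
      exact hcl (csInf_mem_closure hSne hSbdd)
    have hbelow : ∀ s, z₂ ≤ s → s < t → SFr q z₂ ≤ SFr q s := by
      intro s hs1 hs2
      by_contra hc
      push_neg at hc
      exact absurd (csInf_le hSbdd ⟨⟨hs1, hs2.le.trans htz₁⟩, hc⟩) (not_le.mpr hs2)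
    have hrt_ge : SFr q z₂ ≤ SFr q t := by
      rcases hz₂t.lt_or_eq with h | h
      · have h1 : t ∈ closure (Set.Ico z₂ t) := by
          rw [closure_Ico h.ne]
          exact ⟨hz₂t, le_refl _⟩
        exact closure_minimal (fun s hs => hbelow s hs.1 hs.2)
          (isClosed_le continuous_const hcr) h1
      · rw [← h]
    have hrt : SFr q t = SFr q z₂ := le_antisymm hrt_le hrt_ge
    have htlt : t < z₁ := by
      rcases htz₁.lt_or_eq with h | h
      · exact h
      · exfalso; rw [h] at hrt; linarith
    have hrIcc : ∀ s ∈ Set.Icc z₂ t, SFr q z₂ ≤ SFr q s := by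
      intro s hs
      rcases hs.2.lt_or_eq with h | h
      · exact hbelow s hs.1 h
      · rw [h, hrt]
    have hqpos : ∀ s ∈ Set.Icc z₂ t, 0 ≤ q s := by
      intro s hs
      have h1 := hrIcc s hs
      simp only [SFr_apply] at h1
      nlinarith [pow_pos (Real.cosh_pos s) 2, mul_pos hq2 (pow_pos (Real.cosh_pos z₂) 2)]
    have hut : 0 < SFu q q' t :=
      lt_of_lt_of_le hu2 (mono_u _ (convex_Icc z₂ t) hqpos ⟨le_refl _, hz₂t⟩
        ⟨hz₂t, le_refl _⟩ hz₂t)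
    have hpos : 0 < SFu q q' t * Real.cosh t ^ 4 := mul_pos hut (pow_pos (Real.cosh_pos t) 4)
    have hev : ∀ᶠ s in nhdsWithin t (Set.Ioi t), SFr q t < SFr q s := by
      have h1 : ∀ᶠ s in nhdsWithin t {t}ᶜ, 0 < slope (SFr q) t s :=
        (hasDerivAt_iff_tendsto_slope.mp (hdr t)).eventually (eventually_gt_nhds hpos)
      have h2 : nhdsWithin t (Set.Ioi t) ≤ nhdsWithin t {t}ᶜ :=
        nhdsWithin_mono t fun s hs => ne_of_gt hs
      filter_upwards [h2 h1, self_mem_nhdsWithin] with s hs1 hs2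
      rw [slope_def_field] at hs1
      have hst : t < s := hs2
      rcases div_pos_iff.mp hs1 with ⟨h, _⟩ | ⟨_, h⟩
      · linarith
      · linarith
    obtain ⟨w, hw, hsub⟩ := mem_nhdsGT_iff_exists_Ioo_subset.mp hev
    have htw : t < w := hw
    obtain ⟨s, hsS, hslt⟩ := (csInf_lt_iff hSbdd hSne).mp htw
    have hts : t ≤ s := csInf_le hSbdd hsS
    have hne : t ≠ s := by
      intro h
      rw [← h] at hsS
      exact absurd hsS.2 (not_lt.mpr hrt_ge)
    have hfin : SFr q t < SFr q s := hsub ⟨lt_of_le_of_ne hts hne, hslt⟩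
    rw [hrt] at hfin
    obtain ⟨-, hsS2⟩ := hsS
    linarith
  -- Step C : q ≥ 0 and u ≥ κ > 0 on [z₂, ∞)
  have hqpos' : ∀ z, z₂ ≤ z → 0 ≤ q z := by
    intro z hz
    have h1 := hrge z hz
    simp only [SFr_apply] at h1
    nlinarith [pow_pos (Real.cosh_pos z) 2, mul_pos hq2 (pow_pos (Real.cosh_pos z₂) 2)]
  have huge : ∀ z, z₂ ≤ z → SFu q q' z₂ ≤ SFu q q' z := by
    intro z hz
    exact mono_u _ (convex_Ici z₂) (fun x hx => hqpos' x hx) Set.self_mem_Ici hz hz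
  set κ := SFu q q' z₂ with hκ
  -- Step D : growth of r
  have hdg : ∀ z, HasDerivAt (fun z => SFr q z - κ/64 * Real.exp (4*z))
      (SFu q q' z * Real.cosh z ^ 4 - κ/64 * (Real.exp (4*z) * (4 * 1))) z := by
    intro z
    have he : HasDerivAt (fun z : ℝ => Real.exp (4*z)) (Real.exp (4*z) * (4 * 1)) z :=
      ((hasDerivAt_id z).const_mul (4:ℝ)).exp
    exact (hdr z).sub (he.const_mul (κ/64))
  have hgmono : MonotoneOn (fun z => SFr q z - κ/64 * Real.exp (4*z)) (Set.Ici z₂) := by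
    refine monotoneOn_of_deriv_nonneg (convex_Ici _) ?_
      (fun x _ => (hdg x).differentiableAt.differentiableWithinAt) ?_
    · exact (hcr.sub (continuous_const.mul
        (Real.continuous_exp.comp (continuous_const.mul continuous_id)))).continuousOn
    · intro x hx
      rw [interior_Ici] at hx
      rw [(hdg x).deriv]
      have h1 : κ ≤ SFu q q' x := huge x (le_of_lt hx)
      have h2 : Real.exp x / 2 ≤ Real.cosh x := by
        rw [Real.cosh_eq]
        have := Real.exp_pos (-x)
        linarith
      have h3 : (Real.exp x / 2) ^ 4 ≤ Real.cosh x ^ 4 :=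
        pow_le_pow_left₀ (by positivity) h2 4
      have h4 : Real.exp x ^ 4 = Real.exp (4*x) := by
        rw [show (4:ℝ) * x = (4:ℕ) * x by norm_num, Real.exp_nat_mul]
      have h5 : Real.exp (4*x) / 16 ≤ Real.cosh x ^ 4 := by
        rw [← h4]
        nlinarith [h3]
      have h6 : (0:ℝ) ≤ Real.cosh x ^ 4 := (pow_pos (Real.cosh_pos x) 4).le
      nlinarith [mul_le_mul_of_nonneg_right h1 h6, mul_le_mul_of_nonneg_left h5 hu2.le]
  set B := SFr q z₂ - κ/64 * Real.exp (4*z₂) with hB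
  have hrlow : ∀ z, z₂ ≤ z → κ/64 * Real.exp (4*z) + B ≤ SFr q z := by
    intro z hz
    have h := hgmono Set.self_mem_Ici hz hz
    rw [hB]
    linarith
  -- Step E : eventual lower bound q ≥ 1
  have hXpos : (0:ℝ) < 64 * (|B| + 1) / κ := div_pos (by positivity) hu2
  set X := 64 * (|B| + 1) / κ with hX
  set M := max (max z₂ 0) (Real.log X / 2) with hM
  have hq1 : ∀ z, M ≤ z → 1 ≤ q z := by
    intro z hz
    have hz₂z : z₂ ≤ z := le_trans (le_trans (le_max_left _ _) (le_max_left _ _)) hz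
    have h0z : (0:ℝ) ≤ z := le_trans (le_trans (le_max_right _ _) (le_max_left _ _)) hz
    have hlog : Real.log X ≤ 2 * z := by
      have := le_trans (le_max_right _ _) hz
      linarith
    have hexp : X ≤ Real.exp (2*z) := by
      calc X = Real.exp (Real.log X) := (Real.exp_log hXpos).symm
        _ ≤ Real.exp (2*z) := Real.exp_le_exp.mpr hlog
    have hc2 : Real.cosh z ^ 2 ≤ Real.exp (2*z) := by
      have h1 : Real.cosh z ≤ Real.exp z := by
        rw [Real.cosh_eq]
        have : Real.exp (-z) ≤ Real.exp z := Real.exp_le_exp.mpr (by linarith)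
        linarith
      have h2 : Real.cosh z ^ 2 ≤ Real.exp z ^ 2 := pow_le_pow_left₀ (Real.cosh_pos z).le h1 2
      have h3 : Real.exp z ^ 2 = Real.exp (2*z) := by
        rw [show (2:ℝ) * z = (2:ℕ) * z by norm_num, Real.exp_nat_mul]
      linarith
    have hcpos : (0:ℝ) < Real.cosh z ^ 2 := pow_pos (Real.cosh_pos z) 2
    have hrz := hrlow z hz₂z
    have hqz : q z = SFr q z / Real.cosh z ^ 2 := by
      rw [SFr_apply]
      field_simp
    have hden : (κ/64 * Real.exp (4*z) + B) / Real.cosh z ^ 2 ≤ q z := by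
      rw [hqz]
      gcongr
    have hsplit : (κ/64 * Real.exp (4*z) + B) / Real.cosh z ^ 2
        = (κ/64 * Real.exp (4*z)) / Real.cosh z ^ 2 + B / Real.cosh z ^ 2 := add_div _ _ _
    have hterm1 : κ/64 * Real.exp (2*z) ≤ (κ/64 * Real.exp (4*z)) / Real.cosh z ^ 2 := by
      rw [le_div_iff₀ hcpos]
      have hee : Real.exp (2*z) * Real.exp (2*z) = Real.exp (4*z) := by
        rw [← Real.exp_add]; ring_nf
      calc κ/64 * Real.exp (2*z) * Real.cosh z ^ 2
          ≤ κ/64 * Real.exp (2*z) * Real.exp (2*z) := by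
            apply mul_le_mul_of_nonneg_left hc2
            positivity
        _ = κ/64 * Real.exp (4*z) := by rw [mul_assoc, hee]
    have hterm2 : -|B| ≤ B / Real.cosh z ^ 2 := by
      rw [le_div_iff₀ hcpos]
      have h1 : (1:ℝ) ≤ Real.cosh z ^ 2 := by nlinarith [Real.one_le_cosh z]
      nlinarith [neg_abs_le B, abs_nonneg B]
    have hXle : |B| + 1 ≤ κ/64 * Real.exp (2*z) := by
      have hXeq : κ/64 * X = |B| + 1 := by
        rw [hX]
        field_simp
      nlinarith [hexp, hu2]
    rw [hsplit] at hden
    linarith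
  -- Step F : contradiction with integrability
  have h1 : IntegrableOn (fun z => q z ^ 2) (Set.Ici M) := hInt.integrableOn
  have h2 : IntegrableOn (fun _ : ℝ => (1:ℝ)) (Set.Ici M) := by
    refine Integrable.mono' h1 aestronglyMeasurable_const ?_
    filter_upwards [ae_restrict_mem measurableSet_Ici] with z hz
    have := hq1 z hz
    rw [norm_one]
    nlinarith
  rcases integrable_const_iff.mp h2 with h | h
  · norm_num at h
  · rw [isFiniteMeasure_restrict, Real.volume_Ici] at h
    exact absurd h (by simp)

lemma hd1 (z : ℝ) : HasDerivAt (fun w => (1 / Real.cosh w) ^ 2)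
    (-2 * Real.sinh z / Real.cosh z ^ 3) z := by
  have h := (((hasDerivAt_const z (1:ℝ)).div (Real.hasDerivAt_cosh z) (cosh_ne z)).pow 2)
  refine (h.congr_deriv ?_).congr_deriv rfl; symm; simp only [Pi.pow_apply, Pi.sub_apply, Pi.mul_apply, Pi.div_apply]
  push_cast
  field_simp
  ring

lemma hd2 (z : ℝ) : HasDerivAt (fun w => -2 * Real.sinh w / Real.cosh w ^ 3)
    (4 * (1 / Real.cosh z) ^ 2 - 6 * (1 / Real.cosh z) ^ 4) z := by
  have hs : Real.sinh z ^ 2 = Real.cosh z ^ 2 - 1 := by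
    have := Real.cosh_sq_sub_sinh_sq z; linarith
  have h := ((Real.hasDerivAt_sinh z).const_mul (-2:ℝ)).div
    ((Real.hasDerivAt_cosh z).pow 3) (pow_ne_zero 3 (cosh_ne z))
  refine (h.congr_deriv ?_).congr_deriv rfl; symm; simp only [Pi.pow_apply, Pi.sub_apply, Pi.mul_apply, Pi.div_apply]
  push_cast
  field_simp
  linear_combination (-6) * hs

lemma hd3 (z : ℝ) : HasDerivAt (fun w => (1 / Real.cosh w) * Real.tanh w)
    ((2 - Real.cosh z ^ 2) / Real.cosh z ^ 3) z := by
  have hs : Real.sinh z ^ 2 = Real.cosh z ^ 2 - 1 := by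
    have := Real.cosh_sq_sub_sinh_sq z; linarith
  have h := (Real.hasDerivAt_sinh z).div ((Real.hasDerivAt_cosh z).pow 2)
    (pow_ne_zero 2 (cosh_ne z))
  have he : (fun w => (1 / Real.cosh w) * Real.tanh w)
      = fun w => Real.sinh w / Real.cosh w ^ 2 := by
    funext w
    rw [Real.tanh_eq_sinh_div_cosh]
    field_simp
  rw [he]
  refine (h.congr_deriv ?_).congr_deriv rfl; symm; simp only [Pi.pow_apply, Pi.sub_apply, Pi.mul_apply, Pi.div_apply]
  push_cast
  field_simp
  linear_combination (2) * hs

lemma hd4 (z : ℝ) : HasDerivAt (fun w => (2 - Real.cosh w ^ 2) / Real.cosh w ^ 3)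
    (Real.sinh z / Real.cosh z ^ 2 - 6 * Real.sinh z / Real.cosh z ^ 4) z := by
  have hs : Real.sinh z ^ 2 = Real.cosh z ^ 2 - 1 := by
    have := Real.cosh_sq_sub_sinh_sq z; linarith
  have h := ((hasDerivAt_const z (2:ℝ)).sub ((Real.hasDerivAt_cosh z).pow 2)).div
    ((Real.hasDerivAt_cosh z).pow 3) (pow_ne_zero 3 (cosh_ne z))
  refine (h.congr_deriv ?_).congr_deriv rfl; symm; simp only [Pi.pow_apply, Pi.sub_apply, Pi.mul_apply, Pi.div_apply]
  push_cast
  field_simp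
  ring


lemma SFkey2 (lam : ℝ) (hlam : 0 < lam) (q q' : ℝ → ℝ)
    (hq : ∀ z, HasDerivAt q (q' z) z)
    (hq' : ∀ z, HasDerivAt q' (lam * q z + 4 * q z - 6 * q z / Real.cosh z ^ 2) z)
    (hInt : Integrable (fun z => q z ^ 2))
    (z₀ : ℝ) (h0 : 0 < q z₀) : False := by
  rcases le_or_gt 0 (SFu q q' z₀) with h | h
  · exact SFkey lam hlam q q' hq hq' z₀ h0 h hInt
  · refine SFkey lam hlam (fun z => q (-z)) (fun z => -q' (-z)) ?_ ?_ (-z₀)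
      (by simpa using h0) ?_ (by simpa using hInt.comp_neg)
    · intro z
      have h1 := (hq (-z)).comp z ((hasDerivAt_id z).neg)
      have h2 : HasDerivAt (fun z : ℝ => q (-z)) (q' (-z) * (-1)) z := h1
      simpa using h2
    · intro z
      have h1 := ((hq' (-z)).comp z ((hasDerivAt_id z).neg)).neg
      have h2 : HasDerivAt (fun z : ℝ => -q' (-z))
          (-((lam * q (-z) + 4 * q (-z) - 6 * q (-z) / Real.cosh (-z) ^ 2) * (-1))) z := h1
      convert h2 using 1
      rw [Real.cosh_neg]
      ring
    · unfold SFu at h ⊢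
      simp only [neg_neg, Real.cosh_neg, Real.sinh_neg]
      ring_nf
      ring_nf at h
      linarith

lemma SFkey3 (lam : ℝ) (hlam : 0 < lam) (q q' : ℝ → ℝ)
    (hq : ∀ z, HasDerivAt q (q' z) z)
    (hq' : ∀ z, HasDerivAt q' (lam * q z + 4 * q z - 6 * q z / Real.cosh z ^ 2) z)
    (hInt : Integrable (fun z => q z ^ 2))
    (z₀ : ℝ) (h0 : q z₀ ≠ 0) : False := by
  rcases h0.lt_or_gt with h | h
  · refine SFkey2 lam hlam (fun z => -q z) (fun z => -q' z) (fun z => (hq z).neg) ?_ ?_ z₀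
      (by simpa using h)
    · intro z
      have h1 := (hq' z).neg
      refine (h1.congr_deriv ?_).congr_deriv rfl; symm
      ring
    · have he : (fun z => (-q z) ^ 2) = fun z => q z ^ 2 := by funext z; ring
      rw [he]
      exact hInt
  · exact SFkey2 lam hlam q q' hq hq' hInt z₀ h

/-- sech² satisfies q'' + 6 sech² q − 4q = 0 (eigenvalue 0),
sech·tanh satisfies q'' + 6 sech² q − 4q = −3q (eigenvalue −3), and the operator
q ↦ q'' + 6 sech² q − 4q has no eigenvalue λ > 0 with a nonzero L² eigenfunction. -/
theorem stationary_front_spectrum :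
    (∀ z : ℝ, deriv (deriv (fun w => (1 / Real.cosh w) ^ 2)) z
        + 6 * (1 / Real.cosh z) ^ 2 * (1 / Real.cosh z) ^ 2
        - 4 * (1 / Real.cosh z) ^ 2 = 0)
    ∧ (∀ z : ℝ, deriv (deriv (fun w => (1 / Real.cosh w) * Real.tanh w)) z
        + 6 * (1 / Real.cosh z) ^ 2 * ((1 / Real.cosh z) * Real.tanh z)
        - 4 * ((1 / Real.cosh z) * Real.tanh z)
          = -3 * ((1 / Real.cosh z) * Real.tanh z))
    ∧ ∀ lam : ℝ, 0 < lam →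
        ¬ ∃ q : ℝ → ℝ, q ≠ 0 ∧ ContDiff ℝ 2 q
          ∧ Integrable (fun z => (q z) ^ 2)
          ∧ ∀ z : ℝ, deriv (deriv q) z + 6 * (1 / Real.cosh z) ^ 2 * q z - 4 * q z
              = lam * q z := by
  refine ⟨?_, ?_, ?_⟩
  · intro z
    have hda : deriv (fun w => (1 / Real.cosh w) ^ 2)
        = fun z => -2 * Real.sinh z / Real.cosh z ^ 3 := funext fun z => (hd1 z).deriv
    rw [hda, (hd2 z).deriv]
    ring
  · intro z
    have hda : deriv (fun w => (1 / Real.cosh w) * Real.tanh w)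
        = fun z => (2 - Real.cosh z ^ 2) / Real.cosh z ^ 3 := funext fun z => (hd3 z).deriv
    rw [hda, (hd4 z).deriv, Real.tanh_eq_sinh_div_cosh]
    have hc := cosh_ne z
    field_simp
    ring
  · rintro lam hlam ⟨q, hqne, hq2, hInt, hode⟩
    have hdiff : Differentiable ℝ q := hq2.differentiable (by norm_num)
    have hq'diff : Differentiable ℝ (deriv q) := by
      have h := (contDiff_succ_iff_deriv.mp (show ContDiff ℝ (1 + 1) q by exact_mod_cast hq2)).2.2
      exact h.differentiable (by norm_num)
    have hq' : ∀ z, HasDerivAt (deriv q)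
        (lam * q z + 4 * q z - 6 * q z / Real.cosh z ^ 2) z := by
      intro z
      have h1 := (hq'diff z).hasDerivAt
      have h2 : deriv (deriv q) z = lam * q z + 4 * q z - 6 * q z / Real.cosh z ^ 2 := by
        have h3 := hode z
        have hc := cosh_ne z
        field_simp at h3 ⊢
        linarith
      rwa [h2] at h1
    obtain ⟨z₀, hz₀⟩ := Function.ne_iff.mp hqne
    exact SFkey3 lam hlam q (deriv q) (fun z => (hdiff z).hasDerivAt) hq' hInt z₀ hz₀
end

section
/- For c > 0 and λ > 0 real, the cubic −μ³ + (λ/c)μ² + 2λμ − λ²/c has three distinct real roots, exactly one of which is negative and two positive. Its discriminant equals λ³(32 + λ(13c² + 4λ)/c⁴), which is positive for λ > 0. -/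
private lemma quad_three_roots {A B C x y z : ℝ} (hxy : x ≠ y) (hxz : x ≠ z) (hyz : y ≠ z)
    (hx : A * x ^ 2 + B * x + C = 0) (hy : A * y ^ 2 + B * y + C = 0)
    (hz : A * z ^ 2 + B * z + C = 0) : A = 0 ∧ B = 0 ∧ C = 0 := by
  have h1 : A * (x + y) + B = 0 := by
    have hxy' : x - y ≠ 0 := sub_ne_zero.mpr hxy
    have h : (A * (x + y) + B) * (x - y) = 0 := by linear_combination hx - hy
    rcases mul_eq_zero.mp h with h | h
    · exact h
    · exact absurd h hxy'
  have h2 : A * (x + z) + B = 0 := by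
    have hxz' : x - z ≠ 0 := sub_ne_zero.mpr hxz
    have h : (A * (x + z) + B) * (x - z) = 0 := by linear_combination hx - hz
    rcases mul_eq_zero.mp h with h | h
    · exact h
    · exact absurd h hxz'
  have hA : A = 0 := by
    have hyz' : y - z ≠ 0 := sub_ne_zero.mpr hyz
    have h : A * (y - z) = 0 := by linear_combination h1 - h2
    rcases mul_eq_zero.mp h with h | h
    · exact h
    · exact absurd h hyz'
  have hB : B = 0 := by rw [hA] at h1; linarith
  have hC : C = 0 := by rw [hA, hB] at hx; linarith
  exact ⟨hA, hB, hC⟩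

/-- For c > 0 and λ > 0 the cubic −μ³ + (λ/c)μ² + 2λμ − λ²/c has three
distinct real roots, exactly one negative and two positive; its discriminant equals
λ³(32 + λ(13c² + 4λ)/c⁴), which is positive. -/
theorem farfield_cubic_roots (c lam : ℝ) (hc : 0 < c) (hlam : 0 < lam) :
    (∃ μ₁ μ₂ μ₃ : ℝ, μ₁ ≠ μ₂ ∧ μ₁ ≠ μ₃ ∧ μ₂ ≠ μ₃
      ∧ μ₁ < 0 ∧ 0 < μ₂ ∧ 0 < μ₃
      ∧ (∀ μ : ℝ, -μ ^ 3 + (lam / c) * μ ^ 2 + 2 * lam * μ - lam ^ 2 / c = 0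
          ↔ μ = μ₁ ∨ μ = μ₂ ∨ μ = μ₃))
    ∧ (Cubic.mk (-1 : ℝ) (lam / c) (2 * lam) (-(lam ^ 2) / c)).discr
        = lam ^ 3 * (32 + lam * (13 * c ^ 2 + 4 * lam) / c ^ 4)
    ∧ 0 < lam ^ 3 * (32 + lam * (13 * c ^ 2 + 4 * lam) / c ^ 4) := by
  have hc' : c ≠ 0 := ne_of_gt hc
  set f : ℝ → ℝ := fun μ => -μ ^ 3 + (lam / c) * μ ^ 2 + 2 * lam * μ - lam ^ 2 / c with hf
  have hcont : Continuous f := by fun_prop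
  have hlc : 0 < lam / c := div_pos hlam hc
  have hl2c : 0 < lam ^ 2 / c := div_pos (by positivity) hc
  obtain ⟨K, hK⟩ : ∃ K : ℝ, K = 2 * lam + lam ^ 2 / c + 1 := ⟨_, rfl⟩
  obtain ⟨N, hN⟩ : ∃ N : ℝ, N = lam / c + 2 * lam + 1 := ⟨_, rfl⟩
  have hKpos : 0 < K := by rw [hK]; positivity
  have hK1 : (1 : ℝ) ≤ K := by rw [hK]; nlinarith
  have hK2l : 2 * lam < K := by rw [hK]; nlinarith
  have hKl : lam < K := by linarith
  have hKsq : K ≤ K ^ 2 := by nlinarith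
  have hMneg : -K < 0 := by linarith
  have hfM : 0 < f (-K) := by
    have hid : f (-K) = (K ^ 3 - 2 * lam * K) + ((lam / c) * K ^ 2 - lam ^ 2 / c) := by
      simp only [hf]; ring
    have F1 : 0 < K ^ 3 - 2 * lam * K := by
      nlinarith [mul_pos hKpos (sub_pos.mpr (lt_of_lt_of_le hK2l hKsq))]
    have F2 : 0 < (lam / c) * K ^ 2 - lam ^ 2 / c := by
      have h2 : 0 < lam / c * (K ^ 2 - lam) := mul_pos hlc (by nlinarith)
      have hid2 : lam / c * (K ^ 2 - lam) = (lam / c) * K ^ 2 - lam ^ 2 / c := by ring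
      linarith [hid2 ▸ h2]
    rw [hid]; linarith
  have hf0 : f 0 < 0 := by
    have : f 0 = -(lam ^ 2 / c) := by simp only [hf]; ring
    rw [this]; linarith
  have hflc : 0 < f (lam / c) := by
    have : f (lam / c) = lam ^ 2 / c := by simp only [hf]; ring
    rw [this]; exact hl2c
  have hNpos : 0 < N := by rw [hN]; positivity
  have hN1 : (1 : ℝ) ≤ N := by rw [hN]; nlinarith
  have hNgt : lam / c < N := by rw [hN]; nlinarith
  have hfN : f N < 0 := by
    have hid : f N = -(N ^ 2 * (2 * lam + 1)) + 2 * lam * N - lam ^ 2 / c := by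
      simp only [hf]; rw [hN]; ring
    have F : 2 * lam * N < N ^ 2 * (2 * lam + 1) := by
      nlinarith [mul_pos hNpos hNpos]
    rw [hid]; linarith
  obtain ⟨μ₁, hμ₁mem, hμ₁⟩ : ∃ x ∈ Set.Ioo (-K) 0, f x = 0 := by
    obtain ⟨x, hx, hfx⟩ := intermediate_value_Ioo' (le_of_lt hMneg) hcont.continuousOn
      (⟨hf0, hfM⟩ : (0 : ℝ) ∈ Set.Ioo (f 0) (f (-K)))
    exact ⟨x, hx, hfx⟩
  obtain ⟨μ₂, hμ₂mem, hμ₂⟩ : ∃ x ∈ Set.Ioo 0 (lam / c), f x = 0 := by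
    obtain ⟨x, hx, hfx⟩ := intermediate_value_Ioo (le_of_lt hlc) hcont.continuousOn
      (⟨hf0, hflc⟩ : (0 : ℝ) ∈ Set.Ioo (f 0) (f (lam / c)))
    exact ⟨x, hx, hfx⟩
  obtain ⟨μ₃, hμ₃mem, hμ₃⟩ : ∃ x ∈ Set.Ioo (lam / c) N, f x = 0 := by
    obtain ⟨x, hx, hfx⟩ := intermediate_value_Ioo' (le_of_lt hNgt) hcont.continuousOn
      (⟨hfN, hflc⟩ : (0 : ℝ) ∈ Set.Ioo (f N) (f (lam / c)))
    exact ⟨x, hx, hfx⟩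
  have h12 : μ₁ < μ₂ := lt_trans hμ₁mem.2 hμ₂mem.1
  have h23 : μ₂ < μ₃ := lt_trans hμ₂mem.2 hμ₃mem.1
  have h13 : μ₁ < μ₃ := lt_trans h12 h23
  simp only [hf] at hμ₁ hμ₂ hμ₃
  have e1 : (lam / c - (μ₁ + μ₂ + μ₃)) * μ₁ ^ 2 + (2 * lam + (μ₁ * μ₂ + μ₁ * μ₃ + μ₂ * μ₃)) * μ₁
      + (-(lam ^ 2) / c - μ₁ * μ₂ * μ₃) = 0 := by linear_combination hμ₁
  have e2 : (lam / c - (μ₁ + μ₂ + μ₃)) * μ₂ ^ 2 + (2 * lam + (μ₁ * μ₂ + μ₁ * μ₃ + μ₂ * μ₃)) * μ₂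
      + (-(lam ^ 2) / c - μ₁ * μ₂ * μ₃) = 0 := by linear_combination hμ₂
  have e3 : (lam / c - (μ₁ + μ₂ + μ₃)) * μ₃ ^ 2 + (2 * lam + (μ₁ * μ₂ + μ₁ * μ₃ + μ₂ * μ₃)) * μ₃
      + (-(lam ^ 2) / c - μ₁ * μ₂ * μ₃) = 0 := by linear_combination hμ₃
  obtain ⟨hA0, hB0, hC0⟩ := quad_three_roots (ne_of_lt h12) (ne_of_lt h13) (ne_of_lt h23) e1 e2 e3
  refine ⟨⟨μ₁, μ₂, μ₃, ne_of_lt h12, ne_of_lt h13, ne_of_lt h23, hμ₁mem.2, hμ₂mem.1,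
    lt_trans hμ₂mem.1 h23, ?_⟩, ?_, ?_⟩
  · intro μ
    have key : -μ ^ 3 + (lam / c) * μ ^ 2 + 2 * lam * μ - lam ^ 2 / c
        = -((μ - μ₁) * (μ - μ₂) * (μ - μ₃)) := by
      linear_combination μ ^ 2 * hA0 + μ * hB0 + hC0
    rw [key, neg_eq_zero, mul_eq_zero, mul_eq_zero, sub_eq_zero, sub_eq_zero, sub_eq_zero]
    tauto
  · simp only [Cubic.discr]
    field_simp
    ring
  · positivity
end

section
/- For δ > 0 and 0 < γ < 1, the functions u(z) = −1/2 + (1/2)tanh(√(δ/8)·z) and v(z) = −u'(z)/c − u(z), with c = [√δ(1−2γ) + √(δ(1−2γ)² + 8)]/(2√2), satisfy the travelling wave system u'' + c u' + g(u,v) = 0 and c v' − g(u,v) = 0 (i.e. the D=0 system), where g(u,v) = (u+v) − δ·u(u+γ)(u+1). -/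
lemma my_hasDerivAt_tanh (x : ℝ) :
    HasDerivAt Real.tanh (1 - Real.tanh x ^ 2) x := by
  have h := (Real.hasDerivAt_sinh x).div (Real.hasDerivAt_cosh x) (Real.cosh_pos x).ne'
  have he : ∀ y, Real.tanh y = Real.sinh y / Real.cosh y := Real.tanh_eq_sinh_div_cosh
  have : (Real.cosh x * Real.cosh x - Real.sinh x * Real.sinh x) / Real.cosh x ^ 2
      = 1 - Real.tanh x ^ 2 := by
    rw [he]
    have h1 : Real.cosh x ^ 2 - Real.sinh x ^ 2 = 1 := Real.cosh_sq_sub_sinh_sq x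
    field_simp
  rw [← this]
  have hf : Real.tanh = fun y => Real.sinh y / Real.cosh y := funext he
  rw [hf]; exact h

set_option maxHeartbeats 1000000 in
/-- The Wylie–Miura nonstationary front solves the D = 0 travelling
wave system u'' + c u' + g(u,v) = 0, c v' − g(u,v) = 0 with
g(u,v) = (u+v) − δ u(u+γ)(u+1). -/
theorem nonstationary_front_D_zero (δ γ : ℝ) (hδ : 0 < δ) (hγ0 : 0 < γ) (hγ1 : γ < 1) :
    let g : ℝ → ℝ → ℝ := fun u v => (u + v) - δ * u * (u + γ) * (u + 1)
    let c : ℝ := (Real.sqrt δ * (1 - 2 * γ)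
        + Real.sqrt (δ * (1 - 2 * γ) ^ 2 + 8)) / (2 * Real.sqrt 2)
    let u : ℝ → ℝ := fun z => -1 / 2 + (1 / 2) * Real.tanh (Real.sqrt (δ / 8) * z)
    let v : ℝ → ℝ := fun z => -(deriv u z) / c - u z
    ∀ z : ℝ,
      deriv (deriv u) z + c * deriv u z + g (u z) (v z) = 0
        ∧ c * deriv v z - g (u z) (v z) = 0 := by
  intro g c u v z
  set k : ℝ := Real.sqrt (δ / 8) with hk
  set sd : ℝ := Real.sqrt δ with hsd
  set s2 : ℝ := Real.sqrt (δ * (1 - 2 * γ) ^ 2 + 8) with hs2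
  set r2 : ℝ := Real.sqrt 2 with hr2
  have hr2sq : r2 ^ 2 = 2 := Real.sq_sqrt (by norm_num)
  have hr2pos : 0 < r2 := Real.sqrt_pos.2 (by norm_num)
  have hsdsq : sd ^ 2 = δ := Real.sq_sqrt hδ.le
  have hsdnn : 0 ≤ sd := Real.sqrt_nonneg _
  have hs2sq : s2 ^ 2 = δ * (1 - 2 * γ) ^ 2 + 8 := Real.sq_sqrt (by positivity)
  have hs2nn : 0 ≤ s2 := Real.sqrt_nonneg _
  have hksq : k ^ 2 = δ / 8 := Real.sq_sqrt (by positivity)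
  have hknn : 0 ≤ k := Real.sqrt_nonneg _
  have hkeq : sd = 2 * r2 * k := by
    have h1 : (2 * r2 * k) ^ 2 = δ := by rw [mul_pow, mul_pow, hr2sq, hksq]; ring
    have h2 : 0 ≤ 2 * r2 * k := by positivity
    nlinarith [hsdsq, hsdnn]
  have hcpos : 0 < c := by
    have habs : sd * |1 - 2 * γ| < s2 := by
      have h1 : (sd * |1 - 2 * γ|) ^ 2 < s2 ^ 2 := by
        rw [mul_pow, hsdsq, sq_abs, hs2sq]; linarith
      nlinarith [abs_nonneg (1 - 2 * γ), mul_nonneg hsdnn (abs_nonneg (1 - 2 * γ))]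
    have hnum : 0 < sd * (1 - 2 * γ) + s2 := by
      rcases abs_cases (1 - 2 * γ) with h | h
      · nlinarith
      · nlinarith
    show 0 < (sd * (1 - 2 * γ) + s2) / (2 * r2)
    positivity
  have hcne : c ≠ 0 := hcpos.ne'
  -- key identity
  have hc2r2 : c * (2 * r2) = sd * (1 - 2 * γ) + s2 := by
    show (sd * (1 - 2 * γ) + s2) / (2 * r2) * (2 * r2) = _
    field_simp
  have hkey : c ^ 2 = 2 * k * (1 - 2 * γ) * c + 1 := by
    have h8 : (2 * r2) ^ 2 = 8 := by rw [mul_pow, hr2sq]; norm_num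
    have hsq : c ^ 2 * 8 = (sd * (1 - 2 * γ) + s2) ^ 2 := by
      rw [← hc2r2]; linear_combination (-(c ^ 2)) * h8
    rw [hkeq] at hsq hc2r2
    have h2 : (2 * k * (1 - 2 * γ) * c + 1) * 8
        = (2 * r2 * k * (1 - 2 * γ) + s2) ^ 2 := by
      linear_combination 4 * k * (1 - 2 * γ) * r2 * hc2r2
        + (-(8 * k * (1 - 2 * γ) * c) + δ * (1 - 2 * γ) ^ 2 / 2) * hr2sq
        - hs2sq + 4 * r2 ^ 2 * (1 - 2 * γ) ^ 2 * hksq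
    linarith [hsq, h2]
  -- derivatives
  have hT : ∀ x : ℝ, HasDerivAt (fun y : ℝ => Real.tanh (k * y))
      ((1 - Real.tanh (k * x) ^ 2) * k) x := by
    intro x
    have h0 : HasDerivAt (fun y : ℝ => k * y) k x := by
      simpa using (hasDerivAt_id x).const_mul k
    exact (my_hasDerivAt_tanh (k * x)).comp x h0
  have hu : ∀ x : ℝ, HasDerivAt u ((k / 2) * (1 - Real.tanh (k * x) ^ 2)) x := by
    intro x
    have := ((hT x).const_mul (1 / 2 : ℝ)).const_add (-1 / 2 : ℝ)
    exact this.congr_deriv (by ring)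
  have hdu : deriv u = fun x => (k / 2) * (1 - Real.tanh (k * x) ^ 2) :=
    funext fun x => (hu x).deriv
  have hu' : ∀ x : ℝ, HasDerivAt (deriv u)
      (k ^ 2 * Real.tanh (k * x) * (Real.tanh (k * x) ^ 2 - 1)) x := by
    intro x
    rw [hdu]
    have hm := (hT x).mul (hT x)
    have h2 : HasDerivAt (fun y : ℝ => Real.tanh (k * y) ^ 2)
        ((1 - Real.tanh (k * x) ^ 2) * k * Real.tanh (k * x)
          + Real.tanh (k * x) * ((1 - Real.tanh (k * x) ^ 2) * k)) x := by
      have hfe : (fun y : ℝ => Real.tanh (k * y) ^ 2)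
          = fun y : ℝ => Real.tanh (k * y) * Real.tanh (k * y) := by
        funext y; ring
      rw [hfe]; exact hm
    have := (h2.const_sub 1).const_mul (k / 2 : ℝ)
    exact this.congr_deriv (by ring)
  have hdu2 : deriv (deriv u) z
      = k ^ 2 * Real.tanh (k * z) * (Real.tanh (k * z) ^ 2 - 1) := (hu' z).deriv
  have hv : HasDerivAt v
      (-(k ^ 2 * Real.tanh (k * z) * (Real.tanh (k * z) ^ 2 - 1)) / c
        - (k / 2) * (1 - Real.tanh (k * z) ^ 2)) z :=
    (((hu' z).neg).div_const c).sub (hu z)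
  have hdv : deriv v z = -(k ^ 2 * Real.tanh (k * z) * (Real.tanh (k * z) ^ 2 - 1)) / c
      - (k / 2) * (1 - Real.tanh (k * z) ^ 2) := hv.deriv
  set T : ℝ := Real.tanh (k * z) with hTz
  set U' : ℝ := (k / 2) * (1 - T ^ 2) with hU'
  set U'' : ℝ := k ^ 2 * T * (T ^ 2 - 1) with hU''
  have huz : u z = -1 / 2 + (1 / 2) * T := rfl
  have hvz : v z = -U' / c - (-1 / 2 + (1 / 2) * T) := by
    show -(deriv u z) / c - u z = _
    rw [hdu]
  have hδ8 : δ = 8 * k ^ 2 := by rw [hksq]; ring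
  have hsum : u z + v z = -U' / c := by rw [huz, hvz]; ring
  have inner : U'' + 2 * k * (1 - 2 * γ) * U'
      - δ * u z * (u z + γ) * (u z + 1) = 0 := by
    rw [huz, hδ8, hU', hU'']; ring
  have hcE : c * U'' + c ^ 2 * U' - U'
      - c * (δ * u z * (u z + γ) * (u z + 1)) = 0 := by
    linear_combination U' * hkey + c * inner
  have main : deriv (deriv u) z + c * deriv u z + g (u z) (v z) = 0 := by
    rw [hdu2, hdu]
    show U'' + c * U' + ((u z + v z) - δ * u z * (u z + γ) * (u z + 1)) = 0
    rw [hsum]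
    field_simp
    linear_combination hcE
  refine ⟨main, ?_⟩
  rw [hdv]
  have hstep : c * (-(k ^ 2 * T * (T ^ 2 - 1)) / c - (k / 2) * (1 - T ^ 2))
      = -U'' - c * U' := by
    rw [hU'', hU']; field_simp
  rw [hstep]
  have h1 : g (u z) (v z) = -U'' - c * U' := by
    have hmm := main
    rw [hdu2, hdu] at hmm
    have : U'' + c * U' + g (u z) (v z) = 0 := hmm
    linarith
  rw [h1]
  ring
end

section
/- For D ≠ 0, 1 and c ≠ 0, the functions û(z) = −sech²(z)(2D tanh(z) − c)/(c(1−D)) and v̂(z) = sech²(z)(2 tanh(z) − c)/(c(1−D)) satisfy û'' + c û' + g(û,v̂) = 0 and D v̂'' + c v̂' − g(û,v̂) = 0, where g(u,v) = 6(u² − D²v²) + [(c²−4)u + (c²−4D²)v]/(1−D). -/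
lemma tanh_hasDeriv (z : ℝ) : HasDerivAt Real.tanh (1 - Real.tanh z ^ 2) z := by
  have h := ((Real.hasDerivAt_sinh z).div (Real.hasDerivAt_cosh z) (Real.cosh_pos z).ne')
  have hc := (Real.cosh_pos z).ne'
  rw [show Real.sinh / Real.cosh = Real.tanh from funext fun y => (Real.tanh_eq_sinh_div_cosh y).symm] at h
  convert h using 1
  · rfl
  · rfl
  rw [Real.tanh_eq_sinh_div_cosh]
  have := Real.cosh_sq_sub_sinh_sq z
  field_simp

lemma poly_tanh_hasDeriv (a0 a1 a2 a3 a4 z : ℝ) :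
    HasDerivAt (fun z => a0 + a1 * Real.tanh z + a2 * Real.tanh z ^ 2
        + a3 * Real.tanh z ^ 3 + a4 * Real.tanh z ^ 4)
      ((a1 + 2*a2 * Real.tanh z + 3*a3 * Real.tanh z ^ 2 + 4*a4 * Real.tanh z ^ 3)
        * (1 - Real.tanh z ^ 2)) z := by
  have h := tanh_hasDeriv z
  have := (((h.const_mul a1).add ((h.pow 2).const_mul a2)).add ((h.pow 3).const_mul a3)).add
    ((h.pow 4).const_mul a4)
  have := (this.const_add a0)
  convert this using 1
  · rfl
  · rfl
  · funext x; simp only [Pi.add_apply, Pi.pow_apply]; ring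
  · push_cast; ring

lemma sech_sq (z : ℝ) : (1 / Real.cosh z) ^ 2 = 1 - Real.tanh z ^ 2 := by
  have hc := (Real.cosh_pos z).ne'
  rw [Real.tanh_eq_sinh_div_cosh]
  have := Real.cosh_sq_sub_sinh_sq z
  field_simp
  linarith

set_option maxHeartbeats 1000000 in
/-- The exact nonstationary pulse solves the travelling wave system
û'' + c û' + g(û,v̂) = 0 and D v̂'' + c v̂' − g(û,v̂) = 0 with
g(u,v) = 6(u² − D²v²) + [(c²−4)u + (c²−4D²)v]/(1−D). -/
theorem nonstationary_pulse_general (D c : ℝ) (hD0 : D ≠ 0) (hD1 : D ≠ 1) (hc : c ≠ 0) :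
    let g : ℝ → ℝ → ℝ := fun u v =>
      6 * (u ^ 2 - D ^ 2 * v ^ 2)
        + ((c ^ 2 - 4) * u + (c ^ 2 - 4 * D ^ 2) * v) / (1 - D)
    let u : ℝ → ℝ := fun z =>
      -((1 / Real.cosh z) ^ 2 * (2 * D * Real.tanh z - c)) / (c * (1 - D))
    let v : ℝ → ℝ := fun z =>
      ((1 / Real.cosh z) ^ 2 * (2 * Real.tanh z - c)) / (c * (1 - D))
    ∀ z : ℝ,
      deriv (deriv u) z + c * deriv u z + g (u z) (v z) = 0
        ∧ D * deriv (deriv v) z + c * deriv v z - g (u z) (v z) = 0 := by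
  intro g u v z
  have hD1' : (1 : ℝ) - D ≠ 0 := sub_ne_zero.mpr (Ne.symm hD1)
  have hK : c * (1 - D) ≠ 0 := mul_ne_zero hc hD1'
  set K := c * (1 - D) with hKdef
  -- u as polynomial in tanh
  have hu : u = fun z => c/K + (-(2*D)/K) * Real.tanh z + (-c/K) * Real.tanh z ^ 2
      + (2*D/K) * Real.tanh z ^ 3 + (0/K) * Real.tanh z ^ 4 := by
    funext x; simp only [u]; rw [sech_sq x]; field_simp; ring
  have hv : v = fun z => -c/K + (2/K) * Real.tanh z + (c/K) * Real.tanh z ^ 2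
      + (-2/K) * Real.tanh z ^ 3 + (0/K) * Real.tanh z ^ 4 := by
    funext x; simp only [v]; rw [sech_sq x]; field_simp; ring
  -- first derivatives as polynomials in tanh
  have hu' : deriv u = fun z => -(2*D)/K + (-(2*c)/K) * Real.tanh z + (8*D/K) * Real.tanh z ^ 2
      + (2*c/K) * Real.tanh z ^ 3 + (-(6*D)/K) * Real.tanh z ^ 4 := by
    funext x
    rw [hu, (poly_tanh_hasDeriv (c/K) (-(2*D)/K) (-c/K) (2*D/K) (0/K) x).deriv]
    ring
  have hv' : deriv v = fun z => 2/K + (2*c/K) * Real.tanh z + (-8/K) * Real.tanh z ^ 2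
      + (-(2*c)/K) * Real.tanh z ^ 3 + (6/K) * Real.tanh z ^ 4 := by
    funext x
    rw [hv, (poly_tanh_hasDeriv (-c/K) (2/K) (c/K) (-2/K) (0/K) x).deriv]
    ring
  have hu'' : deriv (deriv u) z
      = (-(2*c)/K + 2*(8*D/K) * Real.tanh z + 3*(2*c/K) * Real.tanh z ^ 2
          + 4*(-(6*D)/K) * Real.tanh z ^ 3) * (1 - Real.tanh z ^ 2) := by
    rw [hu', (poly_tanh_hasDeriv (-(2*D)/K) (-(2*c)/K) (8*D/K) (2*c/K) (-(6*D)/K) z).deriv]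
  have hv'' : deriv (deriv v) z
      = (2*c/K + 2*(-8/K) * Real.tanh z + 3*(-(2*c)/K) * Real.tanh z ^ 2
          + 4*(6/K) * Real.tanh z ^ 3) * (1 - Real.tanh z ^ 2) := by
    rw [hv', (poly_tanh_hasDeriv (2/K) (2*c/K) (-8/K) (-(2*c)/K) (6/K) z).deriv]
  have huz : u z = c/K + (-(2*D)/K) * Real.tanh z + (-c/K) * Real.tanh z ^ 2
      + (2*D/K) * Real.tanh z ^ 3 + (0/K) * Real.tanh z ^ 4 := by rw [hu]
  have hvz : v z = -c/K + (2/K) * Real.tanh z + (c/K) * Real.tanh z ^ 2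
      + (-2/K) * Real.tanh z ^ 3 + (0/K) * Real.tanh z ^ 4 := by rw [hv]
  have huz' : deriv u z = -(2*D)/K + (-(2*c)/K) * Real.tanh z + (8*D/K) * Real.tanh z ^ 2
      + (2*c/K) * Real.tanh z ^ 3 + (-(6*D)/K) * Real.tanh z ^ 4 := by rw [hu']
  have hvz' : deriv v z = 2/K + (2*c/K) * Real.tanh z + (-8/K) * Real.tanh z ^ 2
      + (-(2*c)/K) * Real.tanh z ^ 3 + (6/K) * Real.tanh z ^ 4 := by rw [hv']
  constructor
  · rw [hu'', huz', huz, hvz]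
    simp only [g, hKdef]
    generalize Real.tanh z = t
    field_simp
    ring
  · rw [hv'', hvz', huz, hvz]
    simp only [g, hKdef]
    generalize Real.tanh z = t
    field_simp
    ring
end
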